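/- Under the local assumptions, suppose x ∈ B(x*, δ) with F(x) ≠ 0, and let d be the LMMSS direction at x, i.e. the solution of (J(x)ᵀJ(x) + λ(x)LᵀL)d = −J(x)ᵀF(x) with λ(x) = ‖F(x)‖². Then ‖d‖ ≤ c₃·dist(x, X*), where c₃ = (1/(c₂√γ))·√(c₁² + c₂²(‖L‖² + c_F²)). -/
import Mathlib

open Matrix Metric

/-- The continuous linear map on Euclidean spaces induced by a real matrix. -/
noncomputable def matCLM {m n : ℕ} (A : Matrix (Fin m) (Fin n) ℝ) :
    EuclideanSpace ℝ (Fin n) →L[ℝ] EuclideanSpace ℝ (Fin m) :=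
  LinearMap.toContinuousLinearMap (Matrix.toEuclideanLin A)

lemma matCLM_adj {m n : ℕ} (A : Matrix (Fin m) (Fin n) ℝ)
    (u : EuclideanSpace ℝ (Fin m)) (v : EuclideanSpace ℝ (Fin n)) :
    inner (𝕜 := ℝ) (matCLM Aᵀ u) v = inner (𝕜 := ℝ) u (matCLM A v) := by
  have h : Aᵀ = Aᴴ := (Matrix.conjTranspose_eq_transpose_of_trivial A).symm
  rw [h]
  show inner (𝕜 := ℝ) (Matrix.toEuclideanLin Aᴴ u) v
      = inner (𝕜 := ℝ) u (Matrix.toEuclideanLin A v)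
  rw [Matrix.toEuclideanLin_conjTranspose_eq_adjoint, LinearMap.adjoint_inner_left]

lemma matCLM_mul {m n k : ℕ} (A : Matrix (Fin m) (Fin k) ℝ) (B : Matrix (Fin k) (Fin n) ℝ)
    (v : EuclideanSpace ℝ (Fin n)) : matCLM (A * B) v = matCLM A (matCLM B v) := by
  show Matrix.toEuclideanLin (A * B) v = Matrix.toEuclideanLin A (Matrix.toEuclideanLin B v)
  simp [Matrix.toEuclideanLin_apply, Matrix.mulVec_mulVec]

lemma matCLM_add_smul {m n : ℕ} (A B : Matrix (Fin m) (Fin n) ℝ) (c : ℝ)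
    (v : EuclideanSpace ℝ (Fin n)) : matCLM (A + c • B) v = matCLM A v + c • matCLM B v := by
  show Matrix.toEuclideanLin (A + c • B) v = _
  rw [map_add, _root_.map_smul]
  rfl

set_option maxHeartbeats 2000000 in
/-- under the local assumptions, if `x ∈ B(x*, δ)` with `F(x) ≠ 0` and `d` is the
LMMSS direction at `x` (with `λ(x) = ‖F(x)‖²`), then `‖d‖ ≤ c₃ · dist(x, X*)` with
`c₃ = (1/(c₂√γ))·√(c₁² + c₂²(‖L‖² + c_F²))`. -/
theorem lmmss_direction_bound
    (n m p : ℕ)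
    (F : EuclideanSpace ℝ (Fin n) → EuclideanSpace ℝ (Fin m))
    (J : EuclideanSpace ℝ (Fin n) → Matrix (Fin m) (Fin n) ℝ)
    (hdiff : ∀ x, HasFDerivAt F (matCLM (J x)) x)
    (hJcont : Continuous J)
    (hne : ∃ x, F x = 0)
    (xstar : EuclideanSpace ℝ (Fin n)) (hxstar : F xstar = 0)
    (δ : ℝ) (hδ0 : 0 < δ) (hδh : δ < 1 / 2)
    (c1 : ℝ) (hc1pos : 0 < c1)
    (hc1 : ∀ x ∈ closedBall xstar (2 * δ), ∀ y ∈ closedBall xstar (2 * δ),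
      ‖matCLM (J y) (x - y) - (F x - F y)‖ ≤ c1 * ‖x - y‖ ^ 2)
    (cF : ℝ) (hcFpos : 0 < cF)
    (hcF : ∀ x ∈ closedBall xstar (2 * δ), ∀ y ∈ closedBall xstar (2 * δ),
      ‖F x - F y‖ ≤ cF * ‖x - y‖)
    (c2 : ℝ) (hc2pos : 0 < c2)
    (hc2 : ∀ x ∈ closedBall xstar (2 * δ),
      c2 * infDist x {y | F y = 0} ≤ ‖F x‖)
    (L : Matrix (Fin p) (Fin n) ℝ) (γ : ℝ) (hγ : 0 < γ)
    (hcomp : ∀ (x : EuclideanSpace ℝ (Fin n)) (v : EuclideanSpace ℝ (Fin n)),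
      ‖matCLM (J x) v‖ ^ 2 + ‖matCLM L v‖ ^ 2 ≥ γ * ‖v‖ ^ 2)
    (x : EuclideanSpace ℝ (Fin n)) (hx : x ∈ closedBall xstar δ) (hFx : F x ≠ 0)
    (d : EuclideanSpace ℝ (Fin n))
    (hd : matCLM ((J x)ᵀ * J x + ‖F x‖ ^ 2 • (Lᵀ * L)) d = -(matCLM (J x)ᵀ (F x))) :
    ‖d‖ ≤ (1 / (c2 * Real.sqrt γ)) * Real.sqrt (c1 ^ 2 + c2 ^ 2 * (‖matCLM L‖ ^ 2 + cF ^ 2)) *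
      infDist x {y | F y = 0} := by
  -- abbreviations
  set S : Set (EuclideanSpace ℝ (Fin n)) := {y | F y = 0} with hS
  set lam : ℝ := ‖F x‖ ^ 2 with hlam
  have hlam0 : 0 < lam := pow_pos (norm_pos_iff.mpr hFx) 2
  -- closedness, nonemptiness, nearest point
  have hFcont : Continuous F := by
    rw [continuous_iff_continuousAt]
    exact fun z => (hdiff z).continuousAt
  have hScl : IsClosed S := isClosed_eq hFcont continuous_const
  have hSne : S.Nonempty := ⟨xstar, hxstar⟩
  obtain ⟨xb, hxbS, hDeq⟩ := hScl.exists_infDist_eq_dist hSne x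
  have hFxb : F xb = 0 := hxbS
  set D : ℝ := infDist x S with hDdef
  have hDnn : 0 ≤ D := infDist_nonneg
  have hD0 : 0 < D := by
    rcases hDnn.lt_or_eq with h | h
    · exact h
    · exfalso
      have : dist x xb = 0 := by rw [← hDeq, ← h]
      have hxe : x = xb := by rwa [dist_eq_zero] at this
      exact hFx (hxe ▸ hFxb)
  have hxδ : dist x xstar ≤ δ := mem_closedBall.mp hx
  have hDδ : D ≤ δ := le_trans (infDist_le_dist_of_mem (show xstar ∈ S from hxstar)) hxδ
  have hx2 : x ∈ closedBall xstar (2 * δ) := by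
    rw [mem_closedBall]; linarith
  have hxb2 : xb ∈ closedBall xstar (2 * δ) := by
    rw [mem_closedBall]
    have h1 : dist xb x = D := by rw [hDeq, dist_comm]
    calc dist xb xstar ≤ dist xb x + dist x xstar := dist_triangle _ _ _
      _ ≤ D + δ := by rw [h1]; linarith
      _ ≤ 2 * δ := by linarith
  set v : EuclideanSpace ℝ (Fin n) := xb - x with hvdef
  have hvD : ‖v‖ = D := by
    rw [hvdef, ← dist_eq_norm, dist_comm, hDeq]
  -- the normal equation, rearranged
  have key : matCLM (J x)ᵀ (matCLM (J x) d + F x) + lam • (matCLM Lᵀ (matCLM L d)) = 0 := by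
    have h1 := hd
    rw [matCLM_add_smul, matCLM_mul, matCLM_mul] at h1
    have goal_eq : matCLM (J x)ᵀ (matCLM (J x) d + F x) + lam • (matCLM Lᵀ (matCLM L d))
        = (matCLM (J x)ᵀ (matCLM (J x) d) + lam • matCLM Lᵀ (matCLM L d))
          + matCLM (J x)ᵀ (F x) := by
      rw [map_add]; abel
    rw [goal_eq, h1, neg_add_cancel]
  -- inner product identity from the normal equation
  have hw : ∀ w : EuclideanSpace ℝ (Fin n),
      inner (𝕜 := ℝ) (matCLM (J x) w) (matCLM (J x) d + F x)
        + lam * inner (𝕜 := ℝ) (matCLM L w) (matCLM L d) = 0 := by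
    intro w
    have h3 : inner (𝕜 := ℝ)
        (matCLM (J x)ᵀ (matCLM (J x) d + F x) + lam • (matCLM Lᵀ (matCLM L d))) w = 0 := by
      rw [key, inner_zero_left]
    rw [inner_add_left, real_inner_smul_left, matCLM_adj, matCLM_adj,
      real_inner_comm (matCLM (J x) w) (matCLM (J x) d + F x),
      real_inner_comm (matCLM L w) (matCLM L d)] at h3
    exact h3
  -- consequence 1 : ‖J d‖ ≤ ‖F x‖
  have E1 : ‖matCLM (J x) d‖ ^ 2 + lam * ‖matCLM L d‖ ^ 2
      = - inner (𝕜 := ℝ) (matCLM (J x) d) (F x) := by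
    have := hw d
    rw [inner_add_right, real_inner_self_eq_norm_sq, real_inner_self_eq_norm_sq] at this
    linarith
  have hJdF : ‖matCLM (J x) d‖ ≤ ‖F x‖ := by
    have hcs : - inner (𝕜 := ℝ) (matCLM (J x) d) (F x) ≤ ‖matCLM (J x) d‖ * ‖F x‖ := by
      have := abs_real_inner_le_norm (matCLM (J x) d) (F x)
      have h2 := neg_abs_le (inner (𝕜 := ℝ) (matCLM (J x) d) (F x))
      linarith
    have hsq : ‖matCLM (J x) d‖ ^ 2 ≤ ‖matCLM (J x) d‖ * ‖F x‖ := by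
      nlinarith [sq_nonneg (‖matCLM L d‖), mul_nonneg hlam0.le (sq_nonneg ‖matCLM L d‖)]
    rcases (norm_nonneg (matCLM (J x) d)).lt_or_eq with h | h
    · have : ‖matCLM (J x) d‖ * ‖matCLM (J x) d‖ ≤ ‖matCLM (J x) d‖ * ‖F x‖ := by
        nlinarith
      exact le_of_mul_le_mul_left this h
    · rw [← h]; exact norm_nonneg _
  -- consequence 2 : minimality-type inequality
  have hmin : lam * ‖matCLM L d‖ ^ 2
      ≤ ‖matCLM (J x) v + F x‖ ^ 2 + lam * ‖matCLM L v‖ ^ 2 := by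
    have hv1 : matCLM (J x) v + F x
        = matCLM (J x) (v - d) + (matCLM (J x) d + F x) := by
      rw [map_sub (matCLM (J x)) v d]; abel
    have hv2 : matCLM L v = matCLM L (v - d) + matCLM L d := by
      rw [map_sub (matCLM L) v d]; abel
    have e1 : ‖matCLM (J x) (v - d) + (matCLM (J x) d + F x)‖ ^ 2
        = ‖matCLM (J x) (v - d)‖ ^ 2
          + 2 * inner (𝕜 := ℝ) (matCLM (J x) (v - d)) (matCLM (J x) d + F x)
          + ‖matCLM (J x) d + F x‖ ^ 2 := norm_add_sq_real _ _
    have e2 : ‖matCLM L (v - d) + matCLM L d‖ ^ 2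
        = ‖matCLM L (v - d)‖ ^ 2
          + 2 * inner (𝕜 := ℝ) (matCLM L (v - d)) (matCLM L d)
          + ‖matCLM L d‖ ^ 2 := norm_add_sq_real _ _
    rw [hv1, hv2, e1, e2]
    have hcross := hw (v - d)
    nlinarith [sq_nonneg ‖matCLM (J x) (v - d)‖, sq_nonneg ‖matCLM (J x) d + F x‖,
      mul_nonneg hlam0.le (sq_nonneg ‖matCLM L (v - d)‖)]
  -- bounds on the trial point v
  have hJvF : ‖matCLM (J x) v + F x‖ ≤ c1 * ‖v‖ ^ 2 := by
    have := hc1 xb hxb2 x hx2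
    rw [hFxb, zero_sub, sub_neg_eq_add] at this
    exact this
  have hLv : ‖matCLM L v‖ ≤ ‖matCLM L‖ * ‖v‖ := (matCLM L).le_opNorm v
  have hFxcF : ‖F x‖ ≤ cF * ‖v‖ := by
    have := hcF x hx2 xb hxb2
    rw [hFxb, sub_zero] at this
    calc ‖F x‖ ≤ cF * ‖x - xb‖ := this
      _ = cF * ‖v‖ := by rw [hvdef, norm_sub_rev]
  have hFxc2 : c2 * D ≤ ‖F x‖ := hc2 x hx2
  -- assemble
  have hcompxd := hcomp x d
  have H1 : lam * (γ * ‖d‖ ^ 2)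
      ≤ lam * (cF * D) ^ 2 + (c1 * D ^ 2) ^ 2 + lam * (‖matCLM L‖ * D) ^ 2 := by
    have s1 : lam * (γ * ‖d‖ ^ 2) ≤ lam * (‖matCLM (J x) d‖ ^ 2 + ‖matCLM L d‖ ^ 2) :=
      mul_le_mul_of_nonneg_left hcompxd hlam0.le
    have s2 : ‖matCLM (J x) d‖ ^ 2 ≤ lam := by
      rw [hlam]
      exact pow_le_pow_left₀ (norm_nonneg _) hJdF 2
    have s3 : lam ≤ (cF * D) ^ 2 := by
      rw [hlam, ← hvD]
      exact pow_le_pow_left₀ (norm_nonneg _) hFxcF 2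
    have s4 : ‖matCLM (J x) v + F x‖ ^ 2 ≤ (c1 * D ^ 2) ^ 2 := by
      rw [← hvD]
      exact pow_le_pow_left₀ (norm_nonneg _) hJvF 2
    have s5 : ‖matCLM L v‖ ^ 2 ≤ (‖matCLM L‖ * D) ^ 2 := by
      rw [← hvD]
      exact pow_le_pow_left₀ (norm_nonneg _) hLv 2
    nlinarith [mul_le_mul_of_nonneg_left s5 hlam0.le, mul_le_mul_of_nonneg_left s3 hlam0.le]
  have H2 : c2 ^ 2 * D ^ 2 ≤ lam := by
    have : (c2 * D) ^ 2 ≤ ‖F x‖ ^ 2 :=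
      pow_le_pow_left₀ (by positivity) hFxc2 2
    calc c2 ^ 2 * D ^ 2 = (c2 * D) ^ 2 := by ring
      _ ≤ lam := this
  -- key quadratic bound
  have key2 : c2 ^ 2 * γ * ‖d‖ ^ 2 ≤ (c1 ^ 2 + c2 ^ 2 * (‖matCLM L‖ ^ 2 + cF ^ 2)) * D ^ 2 := by
    rcases le_or_gt (γ * ‖d‖ ^ 2) ((cF ^ 2 + ‖matCLM L‖ ^ 2) * D ^ 2) with h | h
    · nlinarith [sq_nonneg c1, sq_nonneg D, sq_nonneg c2]
    · have h7 : lam * (γ * ‖d‖ ^ 2 - (cF ^ 2 + ‖matCLM L‖ ^ 2) * D ^ 2) ≤ c1 ^ 2 * D ^ 4 := by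
        nlinarith [H1]
      have h6 : c2 ^ 2 * D ^ 2 * (γ * ‖d‖ ^ 2 - (cF ^ 2 + ‖matCLM L‖ ^ 2) * D ^ 2)
          ≤ lam * (γ * ‖d‖ ^ 2 - (cF ^ 2 + ‖matCLM L‖ ^ 2) * D ^ 2) :=
        mul_le_mul_of_nonneg_right H2 (by linarith)
      have hD2 : 0 < D ^ 2 := by positivity
      nlinarith [h6, h7]
  -- finish: take square roots
  set c3 : ℝ := (1 / (c2 * Real.sqrt γ)) *
      Real.sqrt (c1 ^ 2 + c2 ^ 2 * (‖matCLM L‖ ^ 2 + cF ^ 2)) with hc3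
  have hγs : Real.sqrt γ > 0 := Real.sqrt_pos.mpr hγ
  have hc3nn : 0 ≤ c3 := by positivity
  have hsq : ‖d‖ ^ 2 ≤ (c3 * D) ^ 2 := by
    have hc3sq : c3 ^ 2 = (c1 ^ 2 + c2 ^ 2 * (‖matCLM L‖ ^ 2 + cF ^ 2)) / (c2 ^ 2 * γ) := by
      rw [hc3, mul_pow, Real.sq_sqrt (by positivity), one_div, inv_pow, mul_pow,
        Real.sq_sqrt hγ.le]
      ring
    have hpos : 0 < c2 ^ 2 * γ := by positivity
    rw [mul_pow, hc3sq, div_mul_eq_mul_div, le_div_iff₀ hpos]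
    nlinarith [key2]
  calc ‖d‖ = Real.sqrt (‖d‖ ^ 2) := (Real.sqrt_sq (norm_nonneg d)).symm
    _ ≤ Real.sqrt ((c3 * D) ^ 2) := Real.sqrt_le_sqrt hsq
    _ = c3 * D := Real.sqrt_sq (by positivity)
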